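/- Theorem 1 (finite-horizon form): For a non-controllable FSC with a source in 𝒫(u,u) where u ≥ v ≥ 0, for every t ∈ {1,…,N}: I(X^t, S_0^{t-v-1}; Y_t | Y^{t-1}) = I(X_{t-v}^t, S_{t-v-1}; Y_t | Y^{t-1}) (for t ≤ v the state blocks are empty and X_{t-v}^t is truncated to X^t, so the identity is read with the corresponding windows). Consequently Σ_{t=1}^N I(X^t, S_0^{t-v-1}; Y_t | Y^{t-1}) = Σ_{t=1}^N I(X_{t-v}^t, S_{t-v-1}; Y_t | Y^{t-1}). -/

import Mathlib

/-!
Common framework: finite-state channels (FSCs), non-controllable FSCs,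
sources with delayed feedback (FB) and delayed state information (SI),
induced joint pmfs, conditional probabilities and conditional mutual
information, following Huang–Kavčić–Ma, "Upper Bounds on the Capacities of
Non-Controllable Finite-State Channels with/without Feedback".

Time convention: for a horizon `N`, the channel inputs are `X_1,…,X_N`
(coordinate `x i` of `x : Fin N → X` is `X_{i+1}`), the states are
`S_0,…,S_N` (coordinate `s j` of `s : Fin (N+1) → S` is `S_j`), and the
outputs are `Y_1,…,Y_N` (coordinate `y i` is `Y_{i+1}`).
-/

open Finset

noncomputable section

namespace FSCPaper

/-- Probability of an event under a pmf `p` on a finite sample space. -/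
def prE {Ω : Type} [Fintype Ω] (p : Ω → ℝ) (E : Set Ω) : ℝ :=
  ∑ ω : Ω, E.indicator p ω

/-- Conditional probability `Pr(E | F)`, a ratio of (sums of) marginals
(with the `0/0 = 0` junk-value convention of real division). -/
def condPr {Ω : Type} [Fintype Ω] (p : Ω → ℝ) (E F : Set Ω) : ℝ :=
  prE p (E ∩ F) / prE p F

/-- The conditional pmf `Pr(· | F)` given an event `F`. -/
def condPMF {Ω : Type} [Fintype Ω] (p : Ω → ℝ) (F : Set Ω) : Ω → ℝ :=
  fun ω => F.indicator p ω / prE p F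

/-- Conditional mutual information `I(A;B|C)` of finite-valued random
variables `fA, fB, fC` under the pmf `p`; zero-probability terms
contribute `0` (the factor in front of the logarithm vanishes). -/
def condMI {Ω A B C : Type} [Fintype Ω] [Fintype A] [Fintype B] [Fintype C]
    (p : Ω → ℝ) (fA : Ω → A) (fB : Ω → B) (fC : Ω → C) : ℝ :=
  ∑ a : A, ∑ b : B, ∑ c : C,
    prE p {ω | fA ω = a ∧ fB ω = b ∧ fC ω = c} *
      Real.log (condPr p {ω | fA ω = a ∧ fB ω = b} {ω | fC ω = c} /
        (condPr p {ω | fA ω = a} {ω | fC ω = c} *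
          condPr p {ω | fB ω = b} {ω | fC ω = c}))

/-- Trajectories `(x_1^N, s_0^N, y_1^N)`. -/
abbrev Traj (X S Y : Type) (N : ℕ) : Type :=
  (Fin N → X) × (Fin (N + 1) → S) × (Fin N → Y)

/-- A general finite-state channel: channel transition kernel
`W(y, s' | x, s)` (a pmf on `Y × S` for each `(x,s)`) and initial state
pmf `init`. -/
structure FSC (X S Y : Type) [Fintype S] [Fintype Y] : Type where
  W : Y → S → X → S → ℝ
  init : S → ℝ
  W_nonneg : ∀ y s' x s, 0 ≤ W y s' x s
  W_sum : ∀ x s, (∑ y : Y, ∑ s' : S, W y s' x s) = 1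
  init_nonneg : ∀ s, 0 ≤ init s
  init_sum : (∑ s : S, init s) = 1

/-- A source without feedback: conditional pmfs `π_t(x_t | x^{t-1})`;
`pol t x a` is the probability that `X_{t+1} = a` given that the previous
inputs are the corresponding coordinates of `x` (by `causal` it depends
only on the coordinates `x j` with `j < t`). -/
structure FFSource (X : Type) [Fintype X] (N : ℕ) : Type where
  pol : Fin N → (Fin N → X) → X → ℝ
  nonneg : ∀ t x a, 0 ≤ pol t x a
  sum_one : ∀ t x, (∑ a : X, pol t x a) = 1
  causal : ∀ (t : Fin N) (x x' : Fin N → X),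
    (∀ j : Fin N, (j : ℕ) < (t : ℕ) → x j = x' j) → pol t x = pol t x'

/-- A non-controllable finite-state channel: output kernel `P(y|x,s)`,
free state-transition kernel `Q(s'|s)`, and initial state pmf `init`. -/
structure NCFSC (X S Y : Type) [Fintype S] [Fintype Y] : Type where
  P : Y → X → S → ℝ
  Q : S → S → ℝ
  init : S → ℝ
  P_nonneg : ∀ y x s, 0 ≤ P y x s
  P_sum : ∀ x s, (∑ y : Y, P y x s) = 1
  Q_nonneg : ∀ s' s, 0 ≤ Q s' s
  Q_sum : ∀ s, (∑ s' : S, Q s' s) = 1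
  init_nonneg : ∀ s, 0 ≤ init s
  init_sum : (∑ s : S, init s) = 1

/-- A source with `u`-delayed feedback and `u`-delayed state information
(the set `𝒫(u,u)`): `pol t x s y a` is
`π_{t+1}(a | x^{t}, s_0^{t-u}, y^{t-u})` in 1-based time; by `causal` it
depends on `(x, s, y)` only through the coordinates
`x_1^{t}` (indices `j < t`), `s_0^{t-u}` (indices `j + u ≤ t`) and
`y_1^{t-u}` (indices `j + u + 1 ≤ t`), i.e. on the past inputs, the
`u`-delayed state information and the `u`-delayed output feedback. -/
structure Source (X S Y : Type) [Fintype X] [Fintype S] [Fintype Y] (N u : ℕ) : Type where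
  pol : Fin N → (Fin N → X) → (Fin (N + 1) → S) → (Fin N → Y) → X → ℝ
  nonneg : ∀ t x s y a, 0 ≤ pol t x s y a
  sum_one : ∀ t x s y, (∑ a : X, pol t x s y a) = 1
  causal : ∀ (t : Fin N) (x x' : Fin N → X) (s s' : Fin (N + 1) → S) (y y' : Fin N → Y),
    (∀ j : Fin N, (j : ℕ) < (t : ℕ) → x j = x' j) →
    (∀ j : Fin (N + 1), (j : ℕ) + u ≤ (t : ℕ) → s j = s' j) →
    (∀ j : Fin N, (j : ℕ) + u + 1 ≤ (t : ℕ) → y j = y' j) →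
    pol t x s y = pol t x' s' y'

variable {X S Y : Type} [Fintype X] [Fintype S] [Fintype Y]

/-- Joint pmf induced by a general FSC and a feedforward source:
`Pr(x^N, s_0^N, y^N) = μ(s_0) ∏_t π_t(x_t|x^{t-1}) W(y_t, s_t | x_t, s_{t-1})`. -/
def jointP0 {N : ℕ} (ch : FSC X S Y) (src : FFSource X N) (ω : Traj X S Y N) : ℝ :=
  ch.init (ω.2.1 0) *
    ∏ i : Fin N,
      src.pol i ω.1 (ω.1 i) *
        ch.W (ω.2.2 i) (ω.2.1 i.succ) (ω.1 i) (ω.2.1 i.castSucc)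

/-- Joint channel transition `W(y, s' | x, s) = P(y|x,s) · Q(s'|s)` of a
non-controllable FSC. -/
def NCFSC.W (ch : NCFSC X S Y) (y : Y) (s' : S) (x : X) (s : S) : ℝ :=
  ch.P y x s * ch.Q s' s

/-- Joint pmf induced by a non-controllable FSC and a source in `𝒫(u,u)`:
`Pr(x^N, s_0^N, y^N) = μ(s_0) ∏_t π_t(x_t|x^{t-1},s_0^{t-u-1},y^{t-u-1}) W(y_t,s_t|x_t,s_{t-1})`. -/
def jointP {N u : ℕ} (ch : NCFSC X S Y) (src : Source X S Y N u) (ω : Traj X S Y N) : ℝ :=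
  ch.init (ω.2.1 0) *
    ∏ i : Fin N,
      src.pol i ω.1 ω.2.1 ω.2.2 (ω.1 i) *
        ch.W (ω.2.2 i) (ω.2.1 i.succ) (ω.1 i) (ω.2.1 i.castSucc)

/-- A source in `𝒫(u,u)` is a `v`-th order conditional Markov source
(the set `𝒫_v(u,u)`) if each policy depends on its arguments only through
`(x_{t-v}^{t-1}, s_{t-v-1}^{t-u-1}, y^{t-u-1})` (windows truncated for
small `t`). -/
def IsMarkov {N u : ℕ} (v : ℕ) (src : Source X S Y N u) : Prop :=
  ∀ (t : Fin N) (x x' : Fin N → X) (s s' : Fin (N + 1) → S) (y y' : Fin N → Y),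
    (∀ j : Fin N, (t : ℕ) ≤ (j : ℕ) + v ∧ (j : ℕ) < (t : ℕ) → x j = x' j) →
    (∀ j : Fin (N + 1), (t : ℕ) ≤ (j : ℕ) + v ∧ (j : ℕ) + u ≤ (t : ℕ) → s j = s' j) →
    (∀ j : Fin N, (j : ℕ) + u + 1 ≤ (t : ℕ) → y j = y' j) →
    src.pol t x s y = src.pol t x' s' y'

/-- `Σ_{t=1}^N I(X^t, S_0^{t-v-1}; Y_t | Y^{t-1})` under the joint law of
the source (state window omitted/truncated when `t - v - 1 < 0`). -/
def objFull {N u : ℕ} (v : ℕ) (ch : NCFSC X S Y) (src : Source X S Y N u) : ℝ :=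
  ∑ t : Fin N,
    condMI (jointP ch src)
      (fun ω : Traj X S Y N =>
        ((fun j : {j : Fin N // (j : ℕ) ≤ (t : ℕ)} => ω.1 j.1),
          fun j : {j : Fin (N + 1) // (j : ℕ) + v ≤ (t : ℕ)} => ω.2.1 j.1))
      (fun ω => ω.2.2 t)
      (fun ω => fun j : {j : Fin N // (j : ℕ) < (t : ℕ)} => ω.2.2 j.1)

/-- `Σ_{t=1}^N I(X_{t-v}^t, S_{t-v-1}; Y_t | Y^{t-1})` under the joint law
of the source (windows truncated for small `t`; the singleton state window
`S_{t-v-1}` is encoded by the condition `j + v = t - 1` in 0-based time and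
is empty for `t ≤ v`). -/
def objWin {N u : ℕ} (v : ℕ) (ch : NCFSC X S Y) (src : Source X S Y N u) : ℝ :=
  ∑ t : Fin N,
    condMI (jointP ch src)
      (fun ω : Traj X S Y N =>
        ((fun j : {j : Fin N // (t : ℕ) ≤ (j : ℕ) + v ∧ (j : ℕ) ≤ (t : ℕ)} => ω.1 j.1),
          fun j : {j : Fin (N + 1) // (j : ℕ) + v = (t : ℕ)} => ω.2.1 j.1))
      (fun ω => ω.2.2 t)
      (fun ω => fun j : {j : Fin N // (j : ℕ) < (t : ℕ)} => ω.2.2 j.1)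

/-- Directed information `I(X^N → Y^N) = Σ_{t=1}^N I(X^t; Y_t | Y^{t-1})`. -/
def directedInfo {N u : ℕ} (ch : NCFSC X S Y) (src : Source X S Y N u) : ℝ :=
  ∑ t : Fin N,
    condMI (jointP ch src)
      (fun ω : Traj X S Y N => fun j : {j : Fin N // (j : ℕ) ≤ (t : ℕ)} => ω.1 j.1)
      (fun ω => ω.2.2 t)
      (fun ω => fun j : {j : Fin N // (j : ℕ) < (t : ℕ)} => ω.2.2 j.1)

/-- The a posteriori vectors `α_{t-1}(y^{t-u-1})` and `α_{t-1}(ỹ^{t-u-1})`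
(at the 1-based time `(t:ℕ)+1`) induced by the two output histories `yh`
and `yh'` coincide: for all window values `(x_{t-v}^{t-1}, s_{t-v-1}^{t-u-1})`
the two a posteriori probabilities agree. -/
def alphaWinEq {N u : ℕ} (v : ℕ) (ch : NCFSC X S Y) (src : Source X S Y N u)
    (t : Fin N) (yh yh' : Fin N → Y) : Prop :=
  ∀ (xf : Fin N → X) (sf : Fin (N + 1) → S),
    condPr (jointP ch src)
        {ω : Traj X S Y N |
          (∀ j : Fin N, (t : ℕ) ≤ (j : ℕ) + v ∧ (j : ℕ) < (t : ℕ) → ω.1 j = xf j) ∧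
            ∀ j : Fin (N + 1), (t : ℕ) ≤ (j : ℕ) + v ∧ (j : ℕ) + u ≤ (t : ℕ) → ω.2.1 j = sf j}
        {ω : Traj X S Y N | ∀ j : Fin N, (j : ℕ) + u + 1 ≤ (t : ℕ) → ω.2.2 j = yh j} =
      condPr (jointP ch src)
        {ω : Traj X S Y N |
          (∀ j : Fin N, (t : ℕ) ≤ (j : ℕ) + v ∧ (j : ℕ) < (t : ℕ) → ω.1 j = xf j) ∧
            ∀ j : Fin (N + 1), (t : ℕ) ≤ (j : ℕ) + v ∧ (j : ℕ) + u ≤ (t : ℕ) → ω.2.1 j = sf j}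
        {ω : Traj X S Y N | ∀ j : Fin N, (j : ℕ) + u + 1 ≤ (t : ℕ) → ω.2.2 j = yh' j}

/-- The set `𝒫'_v(u,u)`: the policy at each time gives the same value on
any two positive-probability output histories inducing the same a
posteriori vector. -/
def AlphaPolicy {N u : ℕ} (v : ℕ) (ch : NCFSC X S Y) (src : Source X S Y N u) : Prop :=
  ∀ (t : Fin N) (yh yh' : Fin N → Y),
    0 < prE (jointP ch src)
        {ω : Traj X S Y N | ∀ j : Fin N, (j : ℕ) + u + 1 ≤ (t : ℕ) → ω.2.2 j = yh j} →
    0 < prE (jointP ch src)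
        {ω : Traj X S Y N | ∀ j : Fin N, (j : ℕ) + u + 1 ≤ (t : ℕ) → ω.2.2 j = yh' j} →
    alphaWinEq v ch src t yh yh' →
    ∀ (xf : Fin N → X) (sf : Fin (N + 1) → S) (a : X),
      src.pol t xf sf yh a = src.pol t xf sf yh' a

section Generic
variable {Ω : Type} [Fintype Ω]

lemma prE_nonneg (p : Ω → ℝ) (hp : ∀ ω, 0 ≤ p ω) (E : Set Ω) : 0 ≤ prE p E :=
  Finset.sum_nonneg fun ω _ => Set.indicator_nonneg (fun a _ => hp a) ω

lemma prE_mono (p : Ω → ℝ) (hp : ∀ ω, 0 ≤ p ω) {E E' : Set Ω} (h : E ⊆ E') :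
    prE p E ≤ prE p E' :=
  Finset.sum_le_sum fun ω _ => Set.indicator_le_indicator_of_subset h hp ω

lemma prE_congr (p : Ω → ℝ) {E E' : Set Ω} (h : ∀ ω, ω ∈ E ↔ ω ∈ E') :
    prE p E = prE p E' := by
  have : E = E' := Set.ext h
  rw [this]

lemma prE_decomp {α : Type} [Fintype α] (p : Ω → ℝ) (f : Ω → α) (E : Set Ω) :
    prE p E = ∑ x : α, prE p {ω | f ω = x ∧ ω ∈ E} := by
  classical
  unfold prE
  rw [Finset.sum_comm]
  refine Finset.sum_congr rfl fun ω _ => ?_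
  by_cases hE : ω ∈ E
  · simp only [Set.indicator_apply, Set.mem_setOf_eq, hE, and_true, if_pos]
    rw [Finset.sum_ite_eq]
    simp
  · simp [Set.indicator_apply, hE]

lemma condMI_reduce {Ω A A₂ B C : Type} [Fintype Ω] [Fintype A] [Fintype A₂] [Fintype B]
    [Fintype C] (p : Ω → ℝ) (hp : ∀ ω, 0 ≤ p ω) (fA : Ω → A) (fB : Ω → B) (fC : Ω → C)
    (g : A → A₂) (F : A → C → ℝ) (G : A₂ → B → C → ℝ)
    (hfac : ∀ a b c, prE p {ω | fA ω = a ∧ fB ω = b ∧ fC ω = c} = F a c * G (g a) b c) :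
    condMI p fA fB fC = condMI p (fun ω => g (fA ω)) fB fC := by
  classical
  set Pr3 : A → B → C → ℝ := fun a b c => prE p {ω | fA ω = a ∧ fB ω = b ∧ fC ω = c} with hPr3
  set Q3 : A₂ → B → C → ℝ := fun a₂ b c => prE p {ω | g (fA ω) = a₂ ∧ fB ω = b ∧ fC ω = c}
    with hQ3
  have h1 : ∀ a₂ b c, Q3 a₂ b c = ∑ a : A, if g a = a₂ then Pr3 a b c else 0 := by
    intro a₂ b c
    rw [hQ3]
    simp only
    rw [prE_decomp p fA]
    refine Finset.sum_congr rfl fun a _ => ?_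
    by_cases h : g a = a₂
    · rw [if_pos h]
      refine prE_congr p fun ω => ?_
      simp only [Set.mem_setOf_eq]
      constructor
      · rintro ⟨h1', h2', h3', h4'⟩; exact ⟨h1', h3', h4'⟩
      · rintro ⟨h1', h3', h4'⟩; exact ⟨h1', by rw [h1', h], h3', h4'⟩
    · rw [if_neg h]
      have : {ω | fA ω = a ∧ ω ∈ {ω | g (fA ω) = a₂ ∧ fB ω = b ∧ fC ω = c}} = (∅ : Set Ω) := by
        ext ω; simp only [Set.mem_setOf_eq, Set.mem_empty_iff_false, iff_false]
        rintro ⟨h1', h2', _⟩; exact h (h1' ▸ h2')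
      rw [this]
      simp [prE]
  have h2 : ∀ a c, prE p {ω | fA ω = a ∧ fC ω = c} = ∑ b : B, Pr3 a b c := by
    intro a c
    rw [prE_decomp p fB]
    refine Finset.sum_congr rfl fun b _ => prE_congr p fun ω => ?_
    simp only [Set.mem_setOf_eq]; tauto
  have h3 : ∀ a₂ c, prE p {ω | g (fA ω) = a₂ ∧ fC ω = c} = ∑ b : B, Q3 a₂ b c := by
    intro a₂ c
    rw [prE_decomp p fB]
    refine Finset.sum_congr rfl fun b _ => prE_congr p fun ω => ?_
    simp only [Set.mem_setOf_eq]; tauto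
  have h5 : ∀ a₂ b c, Q3 a₂ b c = (∑ a : A, if g a = a₂ then F a c else 0) * G a₂ b c := by
    intro a₂ b c
    rw [h1, Finset.sum_mul]
    refine Finset.sum_congr rfl fun a _ => ?_
    by_cases h : g a = a₂
    · rw [if_pos h, if_pos h, hPr3]; simp only; rw [hfac, h]
    · rw [if_neg h, if_neg h, zero_mul]
  have h4 : ∀ a c, prE p {ω | fA ω = a ∧ fC ω = c} = F a c * ∑ b : B, G (g a) b c := by
    intro a c
    rw [h2, Finset.mul_sum]
    exact Finset.sum_congr rfl fun b _ => hfac a b c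
  have h6 : ∀ a₂ c, prE p {ω | g (fA ω) = a₂ ∧ fC ω = c} =
      (∑ a : A, if g a = a₂ then F a c else 0) * ∑ b : B, G a₂ b c := by
    intro a₂ c
    rw [h3, Finset.mul_sum]
    exact Finset.sum_congr rfl fun b _ => h5 a₂ b c
  -- the log-term functions
  set L1 : A → B → C → ℝ := fun a b c =>
    Real.log (condPr p {ω | fA ω = a ∧ fB ω = b} {ω | fC ω = c} /
      (condPr p {ω | fA ω = a} {ω | fC ω = c} * condPr p {ω | fB ω = b} {ω | fC ω = c}))
    with hL1
  set L2 : A₂ → B → C → ℝ := fun a₂ b c =>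
    Real.log (condPr p {ω | g (fA ω) = a₂ ∧ fB ω = b} {ω | fC ω = c} /
      (condPr p {ω | g (fA ω) = a₂} {ω | fC ω = c} * condPr p {ω | fB ω = b} {ω | fC ω = c}))
    with hL2
  have key : ∀ a b c, Pr3 a b c * L1 a b c = Pr3 a b c * L2 (g a) b c := by
    intro a b c
    rcases eq_or_lt_of_le (prE_nonneg p hp {ω | fA ω = a ∧ fB ω = b ∧ fC ω = c}) with h0 | h0
    · rw [hPr3]; simp only; rw [← h0, zero_mul, zero_mul]
    · -- positive case
      have hPr3pos : 0 < Pr3 a b c := h0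
      have hsub1 : {ω | fA ω = a ∧ fB ω = b ∧ fC ω = c} ⊆ {ω | fA ω = a ∧ fC ω = c} := by
        intro ω hω; exact ⟨hω.1, hω.2.2⟩
      have hsub2 : {ω | fA ω = a ∧ fC ω = c} ⊆ {ω | g (fA ω) = g a ∧ fC ω = c} := by
        intro ω hω; exact ⟨by rw [hω.1], hω.2⟩
      have hsub3 : {ω | fA ω = a ∧ fB ω = b ∧ fC ω = c} ⊆
          {ω | g (fA ω) = g a ∧ fB ω = b ∧ fC ω = c} := by
        intro ω hω; exact ⟨by rw [hω.1], hω.2⟩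
      have hsub4 : {ω | fA ω = a ∧ fB ω = b ∧ fC ω = c} ⊆ {ω | fB ω = b ∧ fC ω = c} := by
        intro ω hω; exact ⟨hω.2.1, hω.2.2⟩
      have hsub5 : {ω | fA ω = a ∧ fB ω = b ∧ fC ω = c} ⊆ {ω | fC ω = c} := by
        intro ω hω; exact hω.2.2
      have hPAC : 0 < prE p {ω | fA ω = a ∧ fC ω = c} :=
        lt_of_lt_of_le hPr3pos (prE_mono p hp hsub1)
      have hQAC : 0 < prE p {ω | g (fA ω) = g a ∧ fC ω = c} :=
        lt_of_lt_of_le hPAC (prE_mono p hp hsub2)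
      have hQ3 : 0 < Q3 (g a) b c := lt_of_lt_of_le hPr3pos (prE_mono p hp hsub3)
      have hPBC : 0 < prE p {ω | fB ω = b ∧ fC ω = c} :=
        lt_of_lt_of_le hPr3pos (prE_mono p hp hsub4)
      have hPC : 0 < prE p {ω | fC ω = c} := lt_of_lt_of_le hPr3pos (prE_mono p hp hsub5)
      have hH : Q3 (g a) b c * prE p {ω | fA ω = a ∧ fC ω = c} =
          Pr3 a b c * prE p {ω | g (fA ω) = g a ∧ fC ω = c} := by
        rw [h5, h4, h6, hPr3]; simp only; rw [hfac]; ring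
      congr 1
      rw [hL1, hL2]
      simp only
      congr 1
      -- rewrite condPr's as ratios
      have e1 : condPr p {ω | fA ω = a ∧ fB ω = b} {ω | fC ω = c} = Pr3 a b c / prE p {ω | fC ω = c} := by
        unfold condPr
        rw [prE_congr p (E' := {ω | fA ω = a ∧ fB ω = b ∧ fC ω = c})
          (fun ω => by simp only [Set.mem_inter_iff, Set.mem_setOf_eq, and_assoc])]
      have e2 : condPr p {ω | fA ω = a} {ω | fC ω = c} =
          prE p {ω | fA ω = a ∧ fC ω = c} / prE p {ω | fC ω = c} := by
        unfold condPr
        rw [prE_congr p (E' := {ω | fA ω = a ∧ fC ω = c})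
          (fun ω => by simp only [Set.mem_inter_iff, Set.mem_setOf_eq, and_assoc])]
      have e3 : condPr p {ω | fB ω = b} {ω | fC ω = c} =
          prE p {ω | fB ω = b ∧ fC ω = c} / prE p {ω | fC ω = c} := by
        unfold condPr
        rw [prE_congr p (E' := {ω | fB ω = b ∧ fC ω = c})
          (fun ω => by simp only [Set.mem_inter_iff, Set.mem_setOf_eq, and_assoc])]
      have e4 : condPr p {ω | g (fA ω) = g a ∧ fB ω = b} {ω | fC ω = c} =
          Q3 (g a) b c / prE p {ω | fC ω = c} := by
        unfold condPr
        rw [prE_congr p (E' := {ω | g (fA ω) = g a ∧ fB ω = b ∧ fC ω = c})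
          (fun ω => by simp only [Set.mem_inter_iff, Set.mem_setOf_eq, and_assoc])]
      have e5 : condPr p {ω | g (fA ω) = g a} {ω | fC ω = c} =
          prE p {ω | g (fA ω) = g a ∧ fC ω = c} / prE p {ω | fC ω = c} := by
        unfold condPr
        rw [prE_congr p (E' := {ω | g (fA ω) = g a ∧ fC ω = c})
          (fun ω => by simp only [Set.mem_inter_iff, Set.mem_setOf_eq, and_assoc])]
      rw [e1, e2, e3, e4, e5]
      have hPCne := ne_of_gt hPC
      have hPACne := ne_of_gt hPAC
      have hQACne := ne_of_gt hQAC
      have hPBCne := ne_of_gt hPBC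
      have gen : ∀ x y w z : ℝ, z ≠ 0 → y ≠ 0 → w ≠ 0 →
          (x/z)/((y/z)*(w/z)) = (x/y)*(z/w) := by
        intro x y w z hz hy hw; field_simp
      rw [gen _ _ _ _ hPCne hPACne hPBCne, gen _ _ _ _ hPCne hQACne hPBCne]
      have hratio : Pr3 a b c / prE p {ω | fA ω = a ∧ fC ω = c} =
          Q3 (g a) b c / prE p {ω | g (fA ω) = g a ∧ fC ω = c} := by
        rw [div_eq_div_iff hPACne hQACne]
        linear_combination -hH
      rw [hratio]
  -- now the global sum manipulation
  unfold condMI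
  calc (∑ a : A, ∑ b : B, ∑ c : C, Pr3 a b c * L1 a b c)
      = ∑ a : A, ∑ b : B, ∑ c : C, Pr3 a b c * L2 (g a) b c := by
        refine Finset.sum_congr rfl fun a _ => Finset.sum_congr rfl fun b _ =>
          Finset.sum_congr rfl fun c _ => key a b c
    _ = ∑ b : B, ∑ c : C, ∑ a : A, Pr3 a b c * L2 (g a) b c := by
        rw [Finset.sum_comm]
        exact Finset.sum_congr rfl fun b _ => Finset.sum_comm
    _ = ∑ b : B, ∑ c : C, ∑ a₂ : A₂, Q3 a₂ b c * L2 a₂ b c := by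
        refine Finset.sum_congr rfl fun b _ => Finset.sum_congr rfl fun c _ => ?_
        calc (∑ a : A, Pr3 a b c * L2 (g a) b c)
            = ∑ a : A, ∑ a₂ : A₂, if g a = a₂ then Pr3 a b c * L2 a₂ b c else 0 := by
              refine Finset.sum_congr rfl fun a _ => ?_
              rw [Finset.sum_ite_eq]
              simp
          _ = ∑ a₂ : A₂, ∑ a : A, if g a = a₂ then Pr3 a b c * L2 a₂ b c else 0 :=
              Finset.sum_comm
          _ = ∑ a₂ : A₂, Q3 a₂ b c * L2 a₂ b c := by
              refine Finset.sum_congr rfl fun a₂ _ => ?_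
              rw [h1, Finset.sum_mul]
              refine Finset.sum_congr rfl fun a _ => ?_
              by_cases h : g a = a₂
              · rw [if_pos h, if_pos h]
              · rw [if_neg h, if_neg h, zero_mul]
    _ = ∑ b : B, ∑ a₂ : A₂, ∑ c : C, Q3 a₂ b c * L2 a₂ b c :=
        Finset.sum_congr rfl fun b _ => Finset.sum_comm
    _ = ∑ a₂ : A₂, ∑ b : B, ∑ c : C, Q3 a₂ b c * L2 a₂ b c := Finset.sum_comm

end Generic

section Main
variable {X S Y : Type} [Fintype X] [Fintype S] [Fintype Y] {N u : ℕ}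

/-- The per-time factor in the joint pmf. -/
def Tm (ch : NCFSC X S Y) (src : Source X S Y N u) (ω : Traj X S Y N) (i : Fin N) : ℝ :=
  src.pol i ω.1 ω.2.1 ω.2.2 (ω.1 i) *
    ch.W (ω.2.2 i) (ω.2.1 i.succ) (ω.1 i) (ω.2.1 i.castSucc)

lemma jointP_eq_Tm (ch : NCFSC X S Y) (src : Source X S Y N u) (ω : Traj X S Y N) :
    jointP ch src ω = ch.init (ω.2.1 0) * ∏ i : Fin N, Tm ch src ω i := rfl

lemma Tm_nonneg (ch : NCFSC X S Y) (src : Source X S Y N u) (ω : Traj X S Y N) (i : Fin N) :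
    0 ≤ Tm ch src ω i :=
  mul_nonneg (src.nonneg _ _ _ _ _)
    (mul_nonneg (ch.P_nonneg _ _ _) (ch.Q_nonneg _ _))

lemma jointP_nonneg (ch : NCFSC X S Y) (src : Source X S Y N u) (ω : Traj X S Y N) :
    0 ≤ jointP ch src ω := by
  rw [jointP_eq_Tm]
  exact mul_nonneg (ch.init_nonneg _) (Finset.prod_nonneg fun i _ => Tm_nonneg ch src ω i)

lemma W_total (ch : NCFSC X S Y) (a : X) (s : S) : ∑ c : Y, ∑ b : S, ch.W c b a s = 1 := by
  unfold NCFSC.W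
  simp_rw [← Finset.mul_sum, ch.Q_sum, mul_one]
  exact ch.P_sum a s

/-- The set of trajectories pinned up to stage `k`. -/
def Pin (k : ℕ) (ξ : Fin N → X) (σ : Fin (N + 1) → S) (η : Fin N → Y) :
    Set (Traj X S Y N) :=
  {ω | (∀ i : Fin N, (i : ℕ) < k → ω.1 i = ξ i) ∧
       (∀ j : Fin (N + 1), (j : ℕ) ≤ k → ω.2.1 j = σ j) ∧
       (∀ i : Fin N, (i : ℕ) < k → ω.2.2 i = η i)}

lemma pin_succ_mem (k : ℕ) (hk : k < N) (ξ : Fin N → X) (σ : Fin (N + 1) → S)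
    (η : Fin N → Y) (a : X) (b : S) (c : Y) (ω : Traj X S Y N) :
    ω ∈ Pin (k + 1) (fun i => if (i : ℕ) = k then a else ξ i)
        (fun j => if (j : ℕ) = k + 1 then b else σ j)
        (fun i => if (i : ℕ) = k then c else η i) ↔
      ω ∈ Pin k ξ σ η ∧ ω.1 ⟨k, hk⟩ = a ∧ ω.2.1 ⟨k + 1, by omega⟩ = b ∧
        ω.2.2 ⟨k, hk⟩ = c := by
  constructor
  · rintro ⟨hx, hs, hy⟩
    simp only at hx hs hy
    refine ⟨⟨fun i hi => ?_, fun j hj => ?_, fun i hi => ?_⟩, ?_, ?_, ?_⟩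
    · have := hx i (by omega); rwa [if_neg (by omega)] at this
    · have := hs j (by omega); rwa [if_neg (by omega)] at this
    · have := hy i (by omega); rwa [if_neg (by omega)] at this
    · have := hx ⟨k, hk⟩ (by simp); rwa [if_pos rfl] at this
    · have := hs ⟨k + 1, by omega⟩ (by simp); rwa [if_pos rfl] at this
    · have := hy ⟨k, hk⟩ (by simp); rwa [if_pos rfl] at this
  · rintro ⟨⟨hx, hs, hy⟩, h1, h2, h3⟩
    refine ⟨fun i hi => ?_, fun j hj => ?_, fun i hi => ?_⟩
    · show ω.1 i = if (i : ℕ) = k then a else ξ i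
      by_cases h : (i : ℕ) = k
      · rw [if_pos h]; have hik : i = ⟨k, hk⟩ := Fin.ext h; rw [hik]; exact h1
      · rw [if_neg h]; exact hx i (by omega)
    · show ω.2.1 j = if (j : ℕ) = k + 1 then b else σ j
      by_cases h : (j : ℕ) = k + 1
      · rw [if_pos h]; have hjk : j = ⟨k + 1, by omega⟩ := Fin.ext h; rw [hjk]; exact h2
      · rw [if_neg h]; exact hs j (by omega)
    · show ω.2.2 i = if (i : ℕ) = k then c else η i
      by_cases h : (i : ℕ) = k
      · rw [if_pos h]; have hik : i = ⟨k, hk⟩ := Fin.ext h; rw [hik]; exact h3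
      · rw [if_neg h]; exact hy i (by omega)

lemma tail_sum (ch : NCFSC X S Y) (src : Source X S Y N u) (m k : ℕ) (hmk : k + m = N)
    (ξ : Fin N → X) (σ : Fin (N + 1) → S) (η : Fin N → Y) :
    ∑ ω : Traj X S Y N,
      (Pin k ξ σ η).indicator
        (fun ω => ∏ i ∈ Finset.univ.filter (fun i : Fin N => k ≤ (i : ℕ)), Tm ch src ω i)
        ω = 1 := by
  classical
  induction m generalizing k ξ σ η with
  | zero =>
    have hk : k = N := by omega
    have hfil : Finset.univ.filter (fun i : Fin N => k ≤ (i : ℕ)) = ∅ := by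
      refine Finset.filter_eq_empty_iff.2 fun i _ => by have := i.isLt; omega
    have hmem : ∀ ω : Traj X S Y N, ω ∈ Pin k ξ σ η ↔ ω = (ξ, σ, η) := by
      rintro ⟨x, s, y⟩
      constructor
      · rintro ⟨hx, hs, hy⟩
        refine Prod.ext ?_ (Prod.ext ?_ ?_) <;> simp only
        · exact funext fun i => hx i (by have := i.isLt; omega)
        · exact funext fun j => hs j (by have := j.isLt; omega)
        · exact funext fun i => hy i (by have := i.isLt; omega)
      · rintro h
        rw [h]
        exact ⟨fun _ _ => rfl, fun _ _ => rfl, fun _ _ => rfl⟩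
    calc (∑ ω : Traj X S Y N, (Pin k ξ σ η).indicator
            (fun ω => ∏ i ∈ Finset.univ.filter (fun i : Fin N => k ≤ (i : ℕ)), Tm ch src ω i) ω)
        = ∑ ω : Traj X S Y N, if ω = (ξ, σ, η) then 1 else 0 := by
          refine Finset.sum_congr rfl fun ω _ => ?_
          rw [Set.indicator_apply, hfil, Finset.prod_empty]
          exact if_congr (hmem ω) rfl rfl
      _ = 1 := by rw [Finset.sum_ite_eq' Finset.univ ((ξ, σ, η) : Traj X S Y N) (fun _ => 1)]; simp
  | succ m IH =>
    have hkN : k < N := by omega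
    set kf : Fin N := ⟨k, hkN⟩ with hkf
    set k1 : Fin (N + 1) := ⟨k + 1, by omega⟩ with hk1
    set updX : X → Fin N → X := fun a i => if (i : ℕ) = k then a else ξ i with hupdX
    set updS : S → Fin (N + 1) → S := fun b j => if (j : ℕ) = k + 1 then b else σ j with hupdS
    set updY : Y → Fin N → Y := fun c i => if (i : ℕ) = k then c else η i with hupdY
    have hfil : Finset.univ.filter (fun i : Fin N => k ≤ (i : ℕ)) =
        insert kf (Finset.univ.filter (fun i : Fin N => k + 1 ≤ (i : ℕ))) := by
      ext i
      simp only [Finset.mem_filter, Finset.mem_insert, Finset.mem_univ, true_and, Fin.ext_iff,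
        hkf]
      omega
    have hnot : kf ∉ Finset.univ.filter (fun i : Fin N => k + 1 ≤ (i : ℕ)) := by
      simp [hkf]
    -- pointwise decomposition
    have hpt : ∀ ω : Traj X S Y N,
        (Pin k ξ σ η).indicator
          (fun ω => ∏ i ∈ Finset.univ.filter (fun i : Fin N => k ≤ (i : ℕ)), Tm ch src ω i) ω =
        ∑ abc : X × S × Y,
          (Pin (k + 1) (updX abc.1) (updS abc.2.1) (updY abc.2.2)).indicator
            (fun ω => ∏ i ∈ Finset.univ.filter (fun i : Fin N => k ≤ (i : ℕ)), Tm ch src ω i)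
            ω := by
      intro ω
      by_cases hω : ω ∈ Pin k ξ σ η
      · rw [Set.indicator_of_mem hω]
        symm
        have hiff : ∀ abc : X × S × Y,
            ω ∈ Pin (k + 1) (updX abc.1) (updS abc.2.1) (updY abc.2.2) ↔
              abc = (ω.1 kf, ω.2.1 k1, ω.2.2 kf) := by
          rintro ⟨a, b, c⟩
          rw [pin_succ_mem k hkN ξ σ η a b c ω]
          simp only [Prod.ext_iff]
          constructor
          · rintro ⟨_, h1, h2, h3⟩; exact ⟨h1.symm, h2.symm, h3.symm⟩
          · rintro ⟨h1, h2, h3⟩; exact ⟨hω, h1.symm, h2.symm, h3.symm⟩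
        calc (∑ abc : X × S × Y,
                (Pin (k + 1) (updX abc.1) (updS abc.2.1) (updY abc.2.2)).indicator
                  (fun ω => ∏ i ∈ Finset.univ.filter (fun i : Fin N => k ≤ (i : ℕ)),
                    Tm ch src ω i) ω)
            = ∑ abc : X × S × Y, if abc = (ω.1 kf, ω.2.1 k1, ω.2.2 kf) then
                (∏ i ∈ Finset.univ.filter (fun i : Fin N => k ≤ (i : ℕ)), Tm ch src ω i)
                else 0 := by
              refine Finset.sum_congr rfl fun abc _ => ?_
              rw [Set.indicator_apply]
              exact if_congr (hiff abc) rfl rfl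
          _ = _ := by
              rw [Finset.sum_ite_eq' Finset.univ ((ω.1 kf, ω.2.1 k1, ω.2.2 kf) : X × S × Y)]
              simp
      · rw [Set.indicator_of_notMem hω]
        symm
        refine Finset.sum_eq_zero fun abc _ => ?_
        rw [Set.indicator_of_notMem]
        intro hmem
        exact hω ((pin_succ_mem k hkN ξ σ η abc.1 abc.2.1 abc.2.2 ω).1 hmem).1
    simp_rw [hpt]
    rw [Finset.sum_comm]
    -- now handle each (a,b,c)
    have habc : ∀ abc : X × S × Y,
        (∑ ω : Traj X S Y N,
          (Pin (k + 1) (updX abc.1) (updS abc.2.1) (updY abc.2.2)).indicator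
            (fun ω => ∏ i ∈ Finset.univ.filter (fun i : Fin N => k ≤ (i : ℕ)), Tm ch src ω i)
            ω) =
        src.pol kf ξ σ η abc.1 * ch.W abc.2.2 abc.2.1 abc.1 (σ kf.castSucc) := by
      rintro ⟨a, b, c⟩
      have hconst : ∀ ω ∈ Pin (k + 1) (updX a) (updS b) (updY c),
          (∏ i ∈ Finset.univ.filter (fun i : Fin N => k ≤ (i : ℕ)), Tm ch src ω i) =
          (src.pol kf ξ σ η a * ch.W c b a (σ kf.castSucc)) *
            ∏ i ∈ Finset.univ.filter (fun i : Fin N => k + 1 ≤ (i : ℕ)), Tm ch src ω i := by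
        intro ω hmem
        obtain ⟨hPk, ha, hb, hc⟩ := (pin_succ_mem k hkN ξ σ η a b c ω).1 hmem
        rw [hfil, Finset.prod_insert hnot]
        congr 1
        unfold Tm
        have hkfv : (kf : ℕ) = k := rfl
        have hpol : src.pol kf ω.1 ω.2.1 ω.2.2 = src.pol kf ξ σ η := by
          refine src.causal kf ω.1 ξ ω.2.1 σ ω.2.2 η ?_ ?_ ?_
          · exact fun j hj => hPk.1 j (by rw [hkfv] at hj; omega)
          · exact fun j hj => hPk.2.1 j (by rw [hkfv] at hj; omega)
          · exact fun j hj => hPk.2.2 j (by rw [hkfv] at hj; omega)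
        have hsucc : kf.succ = k1 := rfl
        have hcast : ω.2.1 kf.castSucc = σ kf.castSucc :=
          hPk.2.1 kf.castSucc (by simp [hkf])
        rw [hpol, ha, hsucc, hb, hc, hcast]
      calc (∑ ω : Traj X S Y N,
              (Pin (k + 1) (updX a) (updS b) (updY c)).indicator
                (fun ω => ∏ i ∈ Finset.univ.filter (fun i : Fin N => k ≤ (i : ℕ)),
                  Tm ch src ω i) ω)
          = ∑ ω : Traj X S Y N,
              (src.pol kf ξ σ η a * ch.W c b a (σ kf.castSucc)) *
              (Pin (k + 1) (updX a) (updS b) (updY c)).indicator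
                (fun ω => ∏ i ∈ Finset.univ.filter (fun i : Fin N => k + 1 ≤ (i : ℕ)),
                  Tm ch src ω i) ω := by
            refine Finset.sum_congr rfl fun ω _ => ?_
            by_cases hmem : ω ∈ Pin (k + 1) (updX a) (updS b) (updY c)
            · rw [Set.indicator_of_mem hmem, Set.indicator_of_mem hmem, hconst ω hmem]
            · rw [Set.indicator_of_notMem hmem, Set.indicator_of_notMem hmem, mul_zero]
        _ = src.pol kf ξ σ η a * ch.W c b a (σ kf.castSucc) := by
            rw [← Finset.mul_sum, IH (k + 1) (by omega) (updX a) (updS b) (updY c), mul_one]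
    calc (∑ abc : X × S × Y, ∑ ω : Traj X S Y N,
            (Pin (k + 1) (updX abc.1) (updS abc.2.1) (updY abc.2.2)).indicator
              (fun ω => ∏ i ∈ Finset.univ.filter (fun i : Fin N => k ≤ (i : ℕ)),
                Tm ch src ω i) ω)
        = ∑ abc : X × S × Y,
            src.pol kf ξ σ η abc.1 * ch.W abc.2.2 abc.2.1 abc.1 (σ kf.castSucc) := by
          exact Finset.sum_congr rfl fun abc _ => habc abc
      _ = 1 := by
          rw [Fintype.sum_prod_type]
          have : ∀ a : X, (∑ bc : S × Y, src.pol kf ξ σ η a *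
              ch.W bc.2 bc.1 a (σ kf.castSucc)) = src.pol kf ξ σ η a := by
            intro a
            rw [← Finset.mul_sum]
            have : (∑ bc : S × Y, ch.W bc.2 bc.1 a (σ kf.castSucc)) = 1 := by
              rw [Fintype.sum_prod_type, Finset.sum_comm]
              exact W_total ch a (σ kf.castSucc)
            rw [this, mul_one]
          simp_rw [this]
          exact src.sum_one kf ξ σ η

/-- Value of a per-time factor when all relevant coordinates are pinned. -/
def Tval (ch : NCFSC X S Y) (src : Source X S Y N u) (ξ : Fin N → X) (σ : Fin (N + 1) → S)
    (η : Fin N → Y) (i : Fin N) : ℝ :=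
  src.pol i ξ σ η (ξ i) * ch.W (η i) (σ i.succ) (ξ i) (σ i.castSucc)

lemma pin_prE (ch : NCFSC X S Y) (src : Source X S Y N u) (k : ℕ) (hk : k ≤ N)
    (ξ : Fin N → X) (σ : Fin (N + 1) → S) (η : Fin N → Y) :
    prE (jointP ch src) (Pin k ξ σ η) =
      ch.init (σ 0) *
        ∏ i ∈ Finset.univ.filter (fun i : Fin N => (i : ℕ) < k), Tval ch src ξ σ η i := by
  classical
  have hpt : ∀ ω : Traj X S Y N,
      (Pin k ξ σ η).indicator (jointP ch src) ω =
        (ch.init (σ 0) *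
          ∏ i ∈ Finset.univ.filter (fun i : Fin N => (i : ℕ) < k), Tval ch src ξ σ η i) *
        (Pin k ξ σ η).indicator
          (fun ω => ∏ i ∈ Finset.univ.filter (fun i : Fin N => k ≤ (i : ℕ)), Tm ch src ω i)
          ω := by
    intro ω
    by_cases hω : ω ∈ Pin k ξ σ η
    · rw [Set.indicator_of_mem hω, Set.indicator_of_mem hω, jointP_eq_Tm]
      obtain ⟨hx, hs, hy⟩ := hω
      have h0 : ω.2.1 0 = σ 0 := hs 0 (by simp)
      have hsplit : (∏ i : Fin N, Tm ch src ω i) =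
          (∏ i ∈ Finset.univ.filter (fun i : Fin N => (i : ℕ) < k), Tm ch src ω i) *
          ∏ i ∈ Finset.univ.filter (fun i : Fin N => ¬((i : ℕ) < k)), Tm ch src ω i :=
        (Finset.prod_filter_mul_prod_filter_not Finset.univ _ _).symm
      have hnotlt : Finset.univ.filter (fun i : Fin N => ¬((i : ℕ) < k)) =
          Finset.univ.filter (fun i : Fin N => k ≤ (i : ℕ)) := by
        refine Finset.filter_congr fun i _ => ?_
        constructor <;> (intro h; omega)
      have hTv : ∀ i ∈ Finset.univ.filter (fun i : Fin N => (i : ℕ) < k),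
          Tm ch src ω i = Tval ch src ξ σ η i := by
        intro i hi
        rw [Finset.mem_filter] at hi
        have hik : (i : ℕ) < k := hi.2
        unfold Tm Tval
        have hpol : src.pol i ω.1 ω.2.1 ω.2.2 = src.pol i ξ σ η := by
          refine src.causal i ω.1 ξ ω.2.1 σ ω.2.2 η ?_ ?_ ?_
          · exact fun j hj => hx j (by omega)
          · exact fun j hj => hs j (by omega)
          · exact fun j hj => hy j (by omega)
        have e1 : ω.1 i = ξ i := hx i hik
        have e2 : ω.2.2 i = η i := hy i hik
        have e3 : ω.2.1 i.succ = σ i.succ := hs i.succ (by simp [Fin.val_succ]; omega)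
        have e4 : ω.2.1 i.castSucc = σ i.castSucc := hs i.castSucc (by simp; omega)
        rw [hpol, e1, e2, e3, e4]
      rw [h0, hsplit, hnotlt, Finset.prod_congr rfl hTv]
      ring
    · rw [Set.indicator_of_notMem hω, Set.indicator_of_notMem hω, mul_zero]
  unfold prE
  simp_rw [hpt]
  rw [← Finset.mul_sum, tail_sum ch src (N - k) k (by omega), mul_one]

/-- Merge of the pinned states `σ` with free middle states `τ`. -/
def mg (t : Fin N) (v : ℕ) (σ : Fin (N + 1) → S)
    (τ : {j : Fin (N + 1) // (t : ℕ) < (j : ℕ) + v ∧ (j : ℕ) ≤ (t : ℕ) + 1} → S) :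
    Fin (N + 1) → S :=
  fun j => if h : (t : ℕ) < (j : ℕ) + v ∧ (j : ℕ) ≤ (t : ℕ) + 1 then τ ⟨j, h⟩ else σ j

/-- The event `{X^t = ξ-window, S_0^{t-v-1} = σ-window, Y^t = η-window}`. -/
def Ev (t : Fin N) (v : ℕ) (ξ : Fin N → X) (σ : Fin (N + 1) → S) (η : Fin N → Y) :
    Set (Traj X S Y N) :=
  {ω | (∀ i : Fin N, (i : ℕ) ≤ (t : ℕ) → ω.1 i = ξ i) ∧
       (∀ j : Fin (N + 1), (j : ℕ) + v ≤ (t : ℕ) → ω.2.1 j = σ j) ∧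
       (∀ i : Fin N, (i : ℕ) ≤ (t : ℕ) → ω.2.2 i = η i)}

lemma ev_pin_mem (t : Fin N) (v : ℕ) (ξ : Fin N → X) (σ : Fin (N + 1) → S) (η : Fin N → Y)
    (τ : {j : Fin (N + 1) // (t : ℕ) < (j : ℕ) + v ∧ (j : ℕ) ≤ (t : ℕ) + 1} → S)
    (ω : Traj X S Y N) :
    ω ∈ Pin ((t : ℕ) + 1) ξ (mg t v σ τ) η ↔
      ω ∈ Ev t v ξ σ η ∧ τ = fun j => ω.2.1 j.1 := by
  constructor
  · rintro ⟨hx, hs, hy⟩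
    refine ⟨⟨fun i hi => hx i (by omega), fun j hj => ?_, fun i hi => hy i (by omega)⟩, ?_⟩
    · have := hs j (by omega)
      rwa [mg, dif_neg (by omega)] at this
    · funext j
      have := hs j.1 j.2.2
      rw [mg, dif_pos j.2] at this
      rw [← this]
  · rintro ⟨⟨hx, hs, hy⟩, rfl⟩
    refine ⟨fun i hi => hx i (by omega), fun j hj => ?_, fun i hi => hy i (by omega)⟩
    by_cases h : (t : ℕ) < (j : ℕ) + v ∧ (j : ℕ) ≤ (t : ℕ) + 1
    · rw [mg, dif_pos h]
    · rw [mg, dif_neg h]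
      exact hs j (by omega)

lemma ev_decomp (t : Fin N) (v : ℕ) (ξ : Fin N → X) (σ : Fin (N + 1) → S) (η : Fin N → Y)
    (f : Traj X S Y N → ℝ) (ω : Traj X S Y N) :
    (Ev t v ξ σ η).indicator f ω =
      ∑ τ : {j : Fin (N + 1) // (t : ℕ) < (j : ℕ) + v ∧ (j : ℕ) ≤ (t : ℕ) + 1} → S,
        (Pin ((t : ℕ) + 1) ξ (mg t v σ τ) η).indicator f ω := by
  classical
  by_cases hω : ω ∈ Ev t v ξ σ η
  · rw [Set.indicator_of_mem hω]
    symm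
    calc (∑ τ : {j : Fin (N + 1) // (t : ℕ) < (j : ℕ) + v ∧ (j : ℕ) ≤ (t : ℕ) + 1} → S,
            (Pin ((t : ℕ) + 1) ξ (mg t v σ τ) η).indicator f ω)
        = ∑ τ : {j : Fin (N + 1) // (t : ℕ) < (j : ℕ) + v ∧ (j : ℕ) ≤ (t : ℕ) + 1} → S,
            if τ = (fun j => ω.2.1 j.1) then f ω else 0 := by
          refine Finset.sum_congr rfl fun τ _ => ?_
          rw [Set.indicator_apply]
          refine if_congr ?_ rfl rfl
          rw [ev_pin_mem]
          constructor
          · rintro ⟨_, h⟩; exact h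
          · intro h; exact ⟨hω, h⟩
      _ = f ω := by simp
  · rw [Set.indicator_of_notMem hω]
    symm
    refine Finset.sum_eq_zero fun τ _ => ?_
    rw [Set.indicator_of_notMem]
    intro hmem
    exact hω ((ev_pin_mem t v ξ σ η τ ω).1 hmem).1

lemma ev_prE (ch : NCFSC X S Y) (src : Source X S Y N u) (t : Fin N) (v : ℕ)
    (ξ : Fin N → X) (σ : Fin (N + 1) → S) (η : Fin N → Y) :
    prE (jointP ch src) (Ev t v ξ σ η) =
      ∑ τ : {j : Fin (N + 1) // (t : ℕ) < (j : ℕ) + v ∧ (j : ℕ) ≤ (t : ℕ) + 1} → S,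
        ch.init (mg t v σ τ 0) *
          ∏ i ∈ Finset.univ.filter (fun i : Fin N => (i : ℕ) < (t : ℕ) + 1),
            Tval ch src ξ (mg t v σ τ) η i := by
  classical
  unfold prE
  simp_rw [ev_decomp t v ξ σ η (jointP ch src)]
  rw [Finset.sum_comm]
  refine Finset.sum_congr rfl fun τ _ => ?_
  exact pin_prE ch src ((t : ℕ) + 1) (by have := t.isLt; omega) ξ (mg t v σ τ) η

/-- The `(a, c)`-measurable factor. -/
def Ffun (ch : NCFSC X S Y) (src : Source X S Y N u) (t : Fin N) (v : ℕ)
    (ξ : Fin N → X) (σ : Fin (N + 1) → S) (η : Fin N → Y) : ℝ :=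
  (if v ≤ (t : ℕ) then ch.init (σ 0) else 1) *
  ((∏ i ∈ Finset.univ.filter (fun i : Fin N => (i : ℕ) < (t : ℕ) + 1),
      src.pol i ξ σ η (ξ i)) *
   ((∏ i ∈ Finset.univ.filter (fun i : Fin N => (i : ℕ) < (t : ℕ) ∧ (i : ℕ) + v ≤ (t : ℕ)),
       ch.P (η i) (ξ i) (σ i.castSucc)) *
    (∏ i ∈ Finset.univ.filter (fun i : Fin N => (i : ℕ) + 1 + v ≤ (t : ℕ)),
       ch.Q (σ i.succ) (σ i.castSucc))))

/-- The `(g a, b, c)`-measurable factor. -/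
def Gfun (ch : NCFSC X S Y) (t : Fin N) (v : ℕ)
    (ξ : Fin N → X) (σ : Fin (N + 1) → S) (η : Fin N → Y) : ℝ :=
  ∑ τ : {j : Fin (N + 1) // (t : ℕ) < (j : ℕ) + v ∧ (j : ℕ) ≤ (t : ℕ) + 1} → S,
    (if v ≤ (t : ℕ) then 1 else ch.init (mg t v σ τ 0)) *
    ((∏ i ∈ Finset.univ.filter (fun i : Fin N =>
        (i : ℕ) < (t : ℕ) + 1 ∧ ¬((i : ℕ) < (t : ℕ) ∧ (i : ℕ) + v ≤ (t : ℕ))),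
        ch.P (η i) (ξ i) (mg t v σ τ i.castSucc)) *
     (∏ i ∈ Finset.univ.filter (fun i : Fin N =>
        (i : ℕ) < (t : ℕ) + 1 ∧ ¬((i : ℕ) + 1 + v ≤ (t : ℕ))),
        ch.Q (mg t v σ τ i.succ) (mg t v σ τ i.castSucc)))

lemma ev_fact (ch : NCFSC X S Y) (src : Source X S Y N u) (t : Fin N) (v : ℕ) (hvu : v ≤ u)
    (ξ : Fin N → X) (σ : Fin (N + 1) → S) (η : Fin N → Y) :
    prE (jointP ch src) (Ev t v ξ σ η) =
      Ffun ch src t v ξ σ η * Gfun ch t v ξ σ η := by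
  classical
  rw [ev_prE, Gfun, Finset.mul_sum]
  refine Finset.sum_congr rfl fun τ _ => ?_
  -- expand the product of three factors
  have hexp : (∏ i ∈ Finset.univ.filter (fun i : Fin N => (i : ℕ) < (t : ℕ) + 1),
      Tval ch src ξ (mg t v σ τ) η i) =
      (∏ i ∈ Finset.univ.filter (fun i : Fin N => (i : ℕ) < (t : ℕ) + 1),
        src.pol i ξ σ η (ξ i)) *
      ((∏ i ∈ Finset.univ.filter (fun i : Fin N => (i : ℕ) < (t : ℕ) + 1),
        ch.P (η i) (ξ i) (mg t v σ τ i.castSucc)) *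
       (∏ i ∈ Finset.univ.filter (fun i : Fin N => (i : ℕ) < (t : ℕ) + 1),
        ch.Q (mg t v σ τ i.succ) (mg t v σ τ i.castSucc))) := by
    rw [← Finset.prod_mul_distrib, ← Finset.prod_mul_distrib]
    refine Finset.prod_congr rfl fun i hi => ?_
    rw [Finset.mem_filter] at hi
    have hpol : src.pol i ξ (mg t v σ τ) η = src.pol i ξ σ η := by
      refine src.causal i ξ ξ (mg t v σ τ) σ η η (fun _ _ => rfl) ?_ (fun _ _ => rfl)
      intro j hj
      rw [mg, dif_neg (by omega)]
    rw [Tval, NCFSC.W, hpol]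
  rw [hexp]
  -- split the P-product
  have hPsplit : (∏ i ∈ Finset.univ.filter (fun i : Fin N => (i : ℕ) < (t : ℕ) + 1),
      ch.P (η i) (ξ i) (mg t v σ τ i.castSucc)) =
      (∏ i ∈ Finset.univ.filter (fun i : Fin N => (i : ℕ) < (t : ℕ) ∧ (i : ℕ) + v ≤ (t : ℕ)),
        ch.P (η i) (ξ i) (σ i.castSucc)) *
      (∏ i ∈ Finset.univ.filter (fun i : Fin N =>
          (i : ℕ) < (t : ℕ) + 1 ∧ ¬((i : ℕ) < (t : ℕ) ∧ (i : ℕ) + v ≤ (t : ℕ))),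
        ch.P (η i) (ξ i) (mg t v σ τ i.castSucc)) := by
    rw [← Finset.prod_filter_mul_prod_filter_not
      (Finset.univ.filter (fun i : Fin N => (i : ℕ) < (t : ℕ) + 1))
      (fun i : Fin N => (i : ℕ) < (t : ℕ) ∧ (i : ℕ) + v ≤ (t : ℕ))]
    rw [Finset.filter_filter, Finset.filter_filter]
    congr 1
    · refine Finset.prod_congr (Finset.filter_congr fun i _ => by constructor <;>
        (intro h; omega)) fun i hi => ?_
      rw [Finset.mem_filter] at hi
      rw [mg, dif_neg (by simp only [Fin.coe_castSucc]; omega)]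
  rw [hPsplit]
  -- split the Q-product
  have hQsplit : (∏ i ∈ Finset.univ.filter (fun i : Fin N => (i : ℕ) < (t : ℕ) + 1),
      ch.Q (mg t v σ τ i.succ) (mg t v σ τ i.castSucc)) =
      (∏ i ∈ Finset.univ.filter (fun i : Fin N => (i : ℕ) + 1 + v ≤ (t : ℕ)),
        ch.Q (σ i.succ) (σ i.castSucc)) *
      (∏ i ∈ Finset.univ.filter (fun i : Fin N =>
          (i : ℕ) < (t : ℕ) + 1 ∧ ¬((i : ℕ) + 1 + v ≤ (t : ℕ))),
        ch.Q (mg t v σ τ i.succ) (mg t v σ τ i.castSucc)) := by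
    rw [← Finset.prod_filter_mul_prod_filter_not
      (Finset.univ.filter (fun i : Fin N => (i : ℕ) < (t : ℕ) + 1))
      (fun i : Fin N => (i : ℕ) + 1 + v ≤ (t : ℕ))]
    rw [Finset.filter_filter, Finset.filter_filter]
    congr 1
    · refine Finset.prod_congr (Finset.filter_congr fun i _ => by constructor <;>
        (intro h; omega)) fun i hi => ?_
      rw [Finset.mem_filter] at hi
      rw [mg, dif_neg (by simp only [Fin.val_succ]; omega),
        mg, dif_neg (by simp only [Fin.coe_castSucc]; omega)]
  rw [hQsplit]
  -- the initial factor
  have hinit : ch.init (mg t v σ τ 0) =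
      (if v ≤ (t : ℕ) then ch.init (σ 0) else 1) *
      (if v ≤ (t : ℕ) then 1 else ch.init (mg t v σ τ 0)) := by
    by_cases hv : v ≤ (t : ℕ)
    · rw [if_pos hv, if_pos hv, mul_one]
      congr 1
      rw [mg, dif_neg (by simp only [Fin.val_zero]; omega)]
    · rw [if_neg hv, if_neg hv, one_mul]
  conv_lhs => rw [hinit]
  rw [Ffun]
  ring

lemma Ffun_congr (ch : NCFSC X S Y) (src : Source X S Y N u) (t : Fin N) (v : ℕ) (hvu : v ≤ u)
    (ξ ξ' : Fin N → X) (σ σ' : Fin (N + 1) → S) (η η' : Fin N → Y)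
    (hx : ∀ i : Fin N, (i : ℕ) ≤ (t : ℕ) → ξ i = ξ' i)
    (hs : ∀ j : Fin (N + 1), (j : ℕ) + v ≤ (t : ℕ) → σ j = σ' j)
    (hy : ∀ i : Fin N, (i : ℕ) < (t : ℕ) → η i = η' i) :
    Ffun ch src t v ξ σ η = Ffun ch src t v ξ' σ' η' := by
  unfold Ffun
  congr 1
  · by_cases hv : v ≤ (t : ℕ)
    · rw [if_pos hv, if_pos hv, hs 0 (by simp only [Fin.val_zero]; omega)]
    · rw [if_neg hv, if_neg hv]
  congr 1
  · refine Finset.prod_congr rfl fun i hi => ?_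
    rw [Finset.mem_filter] at hi
    have hit : (i : ℕ) ≤ (t : ℕ) := by omega
    have hpol : src.pol i ξ σ η = src.pol i ξ' σ' η' := by
      refine src.causal i ξ ξ' σ σ' η η' ?_ ?_ ?_
      · exact fun j hj => hx j (by omega)
      · exact fun j hj => hs j (by omega)
      · exact fun j hj => hy j (by omega)
    rw [hpol, hx i hit]
  congr 1
  · refine Finset.prod_congr rfl fun i hi => ?_
    rw [Finset.mem_filter] at hi
    rw [hy i (by omega), hx i (by omega), hs i.castSucc (by simp only [Fin.coe_castSucc]; omega)]
  · refine Finset.prod_congr rfl fun i hi => ?_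
    rw [Finset.mem_filter] at hi
    rw [hs i.succ (by simp only [Fin.val_succ]; omega),
      hs i.castSucc (by simp only [Fin.coe_castSucc]; omega)]

lemma mg_congr (t : Fin N) (v : ℕ) (σ σ' : Fin (N + 1) → S)
    (τ : {j : Fin (N + 1) // (t : ℕ) < (j : ℕ) + v ∧ (j : ℕ) ≤ (t : ℕ) + 1} → S)
    (hs : ∀ j : Fin (N + 1), (j : ℕ) + v = (t : ℕ) → σ j = σ' j)
    (j : Fin (N + 1))
    (hj : (j : ℕ) + v = (t : ℕ) ∨ ((t : ℕ) < (j : ℕ) + v ∧ (j : ℕ) ≤ (t : ℕ) + 1)) :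
    mg t v σ τ j = mg t v σ' τ j := by
  by_cases hc : (t : ℕ) < (j : ℕ) + v ∧ (j : ℕ) ≤ (t : ℕ) + 1
  · rw [mg, mg, dif_pos hc, dif_pos hc]
  · rw [mg, mg, dif_neg hc, dif_neg hc]
    exact hs j (by omega)

lemma Gfun_congr (ch : NCFSC X S Y) (t : Fin N) (v : ℕ)
    (ξ ξ' : Fin N → X) (σ σ' : Fin (N + 1) → S) (η η' : Fin N → Y)
    (hx : ∀ i : Fin N, (t : ℕ) ≤ (i : ℕ) + v → (i : ℕ) ≤ (t : ℕ) → ξ i = ξ' i)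
    (hs : ∀ j : Fin (N + 1), (j : ℕ) + v = (t : ℕ) → σ j = σ' j)
    (hy : ∀ i : Fin N, (i : ℕ) < (t : ℕ) → η i = η' i)
    (hyt : η t = η' t) :
    Gfun ch t v ξ σ η = Gfun ch t v ξ' σ' η' := by
  unfold Gfun
  refine Finset.sum_congr rfl fun τ _ => ?_
  congr 1
  · by_cases hv : v ≤ (t : ℕ)
    · rw [if_pos hv, if_pos hv]
    · rw [if_neg hv, if_neg hv,
        mg_congr t v σ σ' τ hs 0 (by simp only [Fin.val_zero]; omega)]
  congr 1
  · refine Finset.prod_congr rfl fun i hi => ?_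
    rw [Finset.mem_filter] at hi
    have hηeq : η i = η' i := by
      by_cases hit : (i : ℕ) < (t : ℕ)
      · exact hy i hit
      · have : i = t := Fin.ext (by omega)
        rw [this]; exact hyt
    rw [hηeq, hx i (by omega) (by omega),
      mg_congr t v σ σ' τ hs i.castSucc (by simp only [Fin.coe_castSucc]; omega)]
  · refine Finset.prod_congr rfl fun i hi => ?_
    rw [Finset.mem_filter] at hi
    rw [mg_congr t v σ σ' τ hs i.succ (by simp only [Fin.val_succ]; omega),
      mg_congr t v σ σ' τ hs i.castSucc (by simp only [Fin.coe_castSucc]; omega)]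

lemma key_t (ch : NCFSC X S Y) (v : ℕ) (hvu : v ≤ u) (src : Source X S Y N u) (t : Fin N) :
    condMI (jointP ch src)
        (fun ω : Traj X S Y N =>
          ((fun j : {j : Fin N // (j : ℕ) ≤ (t : ℕ)} => ω.1 j.1),
            fun j : {j : Fin (N + 1) // (j : ℕ) + v ≤ (t : ℕ)} => ω.2.1 j.1))
        (fun ω => ω.2.2 t)
        (fun ω => fun j : {j : Fin N // (j : ℕ) < (t : ℕ)} => ω.2.2 j.1) =
      condMI (jointP ch src)
        (fun ω : Traj X S Y N =>
          ((fun j : {j : Fin N // (t : ℕ) ≤ (j : ℕ) + v ∧ (j : ℕ) ≤ (t : ℕ)} => ω.1 j.1),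
            fun j : {j : Fin (N + 1) // (j : ℕ) + v = (t : ℕ)} => ω.2.1 j.1))
        (fun ω => ω.2.2 t)
        (fun ω => fun j : {j : Fin N // (j : ℕ) < (t : ℕ)} => ω.2.2 j.1) := by
  classical
  refine condMI_reduce (jointP ch src) (jointP_nonneg ch src)
    (fun ω : Traj X S Y N =>
      ((fun j : {j : Fin N // (j : ℕ) ≤ (t : ℕ)} => ω.1 j.1),
        fun j : {j : Fin (N + 1) // (j : ℕ) + v ≤ (t : ℕ)} => ω.2.1 j.1))
    (fun ω => ω.2.2 t)
    (fun ω => fun j : {j : Fin N // (j : ℕ) < (t : ℕ)} => ω.2.2 j.1)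
    (fun a =>
      ((fun j : {j : Fin N // (t : ℕ) ≤ (j : ℕ) + v ∧ (j : ℕ) ≤ (t : ℕ)} => a.1 ⟨j.1, j.2.2⟩),
        fun j : {j : Fin (N + 1) // (j : ℕ) + v = (t : ℕ)} => a.2 ⟨j.1, le_of_eq j.2⟩))
    (fun a c =>
      if h : ∃ ω : Traj X S Y N,
          ((fun j : {j : Fin N // (j : ℕ) ≤ (t : ℕ)} => ω.1 j.1),
            fun j : {j : Fin (N + 1) // (j : ℕ) + v ≤ (t : ℕ)} => ω.2.1 j.1) = a ∧
          (fun j : {j : Fin N // (j : ℕ) < (t : ℕ)} => ω.2.2 j.1) = c then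
        Ffun ch src t v h.choose.1 h.choose.2.1 h.choose.2.2
      else 0)
    (fun a₂ b c =>
      if h : ∃ ω : Traj X S Y N,
          ((fun j : {j : Fin N // (t : ℕ) ≤ (j : ℕ) + v ∧ (j : ℕ) ≤ (t : ℕ)} => ω.1 j.1),
            fun j : {j : Fin (N + 1) // (j : ℕ) + v = (t : ℕ)} => ω.2.1 j.1) = a₂ ∧
          ω.2.2 t = b ∧
          (fun j : {j : Fin N // (j : ℕ) < (t : ℕ)} => ω.2.2 j.1) = c then
        Gfun ch t v h.choose.1 h.choose.2.1 h.choose.2.2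
      else 0)
    ?_
  intro a b c
  by_cases h : ∃ ω : Traj X S Y N,
      ((fun j : {j : Fin N // (j : ℕ) ≤ (t : ℕ)} => ω.1 j.1),
        fun j : {j : Fin (N + 1) // (j : ℕ) + v ≤ (t : ℕ)} => ω.2.1 j.1) = a ∧
      ω.2.2 t = b ∧
      (fun j : {j : Fin N // (j : ℕ) < (t : ℕ)} => ω.2.2 j.1) = c
  · obtain ⟨ω₀, hA0, hB0, hC0⟩ := h
    have hset : {ω : Traj X S Y N |
        ((fun j : {j : Fin N // (j : ℕ) ≤ (t : ℕ)} => ω.1 j.1),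
          fun j : {j : Fin (N + 1) // (j : ℕ) + v ≤ (t : ℕ)} => ω.2.1 j.1) = a ∧
        ω.2.2 t = b ∧
        (fun j : {j : Fin N // (j : ℕ) < (t : ℕ)} => ω.2.2 j.1) = c} =
        Ev t v ω₀.1 ω₀.2.1 ω₀.2.2 := by
      ext ω
      simp only [Set.mem_setOf_eq, Ev]
      rw [← hA0, ← hB0, ← hC0]
      constructor
      · rintro ⟨h1, h2, h3⟩
        have hx1 := congrArg Prod.fst h1
        have hs1 := congrArg Prod.snd h1
        refine ⟨fun i hi => congrFun hx1 ⟨i, hi⟩, fun j hj => congrFun hs1 ⟨j, hj⟩,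
          fun i hi => ?_⟩
        rcases Nat.lt_or_ge (i : ℕ) (t : ℕ) with hit | hit
        · exact congrFun h3 ⟨i, hit⟩
        · have hieq : i = t := Fin.ext (by omega)
          rw [hieq]; exact h2
      · rintro ⟨h1, h2, h3⟩
        exact ⟨Prod.ext (funext fun j => h1 j.1 j.2) (funext fun j => h2 j.1 j.2),
          h3 t (le_refl _), funext fun j => h3 j.1 (by omega)⟩
    rw [hset, ev_fact ch src t v hvu]
    have hex1 : ∃ ω : Traj X S Y N,
        ((fun j : {j : Fin N // (j : ℕ) ≤ (t : ℕ)} => ω.1 j.1),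
          fun j : {j : Fin (N + 1) // (j : ℕ) + v ≤ (t : ℕ)} => ω.2.1 j.1) = a ∧
        (fun j : {j : Fin N // (j : ℕ) < (t : ℕ)} => ω.2.2 j.1) = c := ⟨ω₀, hA0, hC0⟩
    have hex2 : ∃ ω : Traj X S Y N,
        ((fun j : {j : Fin N // (t : ℕ) ≤ (j : ℕ) + v ∧ (j : ℕ) ≤ (t : ℕ)} => ω.1 j.1),
          fun j : {j : Fin (N + 1) // (j : ℕ) + v = (t : ℕ)} => ω.2.1 j.1) =
          ((fun j : {j : Fin N // (t : ℕ) ≤ (j : ℕ) + v ∧ (j : ℕ) ≤ (t : ℕ)} => a.1 ⟨j.1, j.2.2⟩),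
            fun j : {j : Fin (N + 1) // (j : ℕ) + v = (t : ℕ)} => a.2 ⟨j.1, le_of_eq j.2⟩) ∧
        ω.2.2 t = b ∧
        (fun j : {j : Fin N // (j : ℕ) < (t : ℕ)} => ω.2.2 j.1) = c := by
      refine ⟨ω₀, ?_, hB0, hC0⟩
      rw [← hA0]
    beta_reduce
    rw [dif_pos hex1, dif_pos hex2]
    have hF : Ffun ch src t v hex1.choose.1 hex1.choose.2.1 hex1.choose.2.2 =
        Ffun ch src t v ω₀.1 ω₀.2.1 ω₀.2.2 := by
      obtain ⟨hA1, hC1⟩ := hex1.choose_spec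
      have hAA := hA1.trans hA0.symm
      have hCC := hC1.trans hC0.symm
      refine Ffun_congr ch src t v hvu _ _ _ _ _ _ ?_ ?_ ?_
      · exact fun i hi => congrFun (congrArg Prod.fst hAA) ⟨i, hi⟩
      · exact fun j hj => congrFun (congrArg Prod.snd hAA) ⟨j, hj⟩
      · exact fun i hi => congrFun hCC ⟨i, hi⟩
    have hG : Gfun ch t v hex2.choose.1 hex2.choose.2.1 hex2.choose.2.2 =
        Gfun ch t v ω₀.1 ω₀.2.1 ω₀.2.2 := by
      obtain ⟨hA2, hB2, hC2⟩ := hex2.choose_spec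
      have hA0' : ((fun j : {j : Fin N // (t : ℕ) ≤ (j : ℕ) + v ∧ (j : ℕ) ≤ (t : ℕ)} =>
          ω₀.1 j.1), fun j : {j : Fin (N + 1) // (j : ℕ) + v = (t : ℕ)} => ω₀.2.1 j.1) =
          ((fun j : {j : Fin N // (t : ℕ) ≤ (j : ℕ) + v ∧ (j : ℕ) ≤ (t : ℕ)} =>
            a.1 ⟨j.1, j.2.2⟩),
            fun j : {j : Fin (N + 1) // (j : ℕ) + v = (t : ℕ)} => a.2 ⟨j.1, le_of_eq j.2⟩) := by
        rw [← hA0]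
      have hAA := hA2.trans hA0'.symm
      have hBB := hB2.trans hB0.symm
      have hCC := hC2.trans hC0.symm
      refine Gfun_congr ch t v _ _ _ _ _ _ ?_ ?_ ?_ ?_
      · exact fun i h1 h2 => congrFun (congrArg Prod.fst hAA) ⟨i, ⟨h1, h2⟩⟩
      · exact fun j hj => congrFun (congrArg Prod.snd hAA) ⟨j, hj⟩
      · exact fun i hi => congrFun hCC ⟨i, hi⟩
      · exact hBB
    rw [hF, hG]
  · have hz : prE (jointP ch src) {ω : Traj X S Y N |
        ((fun j : {j : Fin N // (j : ℕ) ≤ (t : ℕ)} => ω.1 j.1),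
          fun j : {j : Fin (N + 1) // (j : ℕ) + v ≤ (t : ℕ)} => ω.2.1 j.1) = a ∧
        ω.2.2 t = b ∧
        (fun j : {j : Fin N // (j : ℕ) < (t : ℕ)} => ω.2.2 j.1) = c} = 0 := by
      unfold prE
      refine Finset.sum_eq_zero fun ω _ => ?_
      rw [Set.indicator_of_notMem]
      exact fun hmem => h ⟨ω, hmem⟩
    rw [hz]
    beta_reduce
    rw [dif_neg, zero_mul]
    intro hex
    obtain ⟨ω₁, hA1, hC1⟩ := hex
    refine h ⟨(ω₁.1, ω₁.2.1, fun i => if i = t then b else ω₁.2.2 i), hA1, ?_, ?_⟩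
    · simp
    · rw [← hC1]
      funext j
      simp only
      rw [if_neg]
      intro heq
      have := congrArg Fin.val heq
      omega

end Main

/-- **Theorem 1, finite-horizon form.** For a
non-controllable FSC with a source in `𝒫(u,u)`, `u ≥ v ≥ 0`, for every
`t ∈ {1,…,N}`:
`I(X^t, S_0^{t-v-1}; Y_t | Y^{t-1}) = I(X_{t-v}^t, S_{t-v-1}; Y_t | Y^{t-1})`
(for `t ≤ v` the state blocks are empty and `X_{t-v}^t` is truncated to
`X^t`, which the index windows below encode automatically).  Consequently
the two finite-horizon sums coincide. -/
theorem statement4 {X S Y : Type} [Fintype X] [Fintype S] [Fintype Y] {N u : ℕ}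
    (ch : NCFSC X S Y) (v : ℕ) (hvu : v ≤ u) (src : Source X S Y N u) :
    (∀ t : Fin N,
      condMI (jointP ch src)
          (fun ω : Traj X S Y N =>
            ((fun j : {j : Fin N // (j : ℕ) ≤ (t : ℕ)} => ω.1 j.1),
              fun j : {j : Fin (N + 1) // (j : ℕ) + v ≤ (t : ℕ)} => ω.2.1 j.1))
          (fun ω => ω.2.2 t)
          (fun ω => fun j : {j : Fin N // (j : ℕ) < (t : ℕ)} => ω.2.2 j.1) =
        condMI (jointP ch src)
          (fun ω : Traj X S Y N =>
            ((fun j : {j : Fin N // (t : ℕ) ≤ (j : ℕ) + v ∧ (j : ℕ) ≤ (t : ℕ)} => ω.1 j.1),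
              fun j : {j : Fin (N + 1) // (j : ℕ) + v = (t : ℕ)} => ω.2.1 j.1))
          (fun ω => ω.2.2 t)
          (fun ω => fun j : {j : Fin N // (j : ℕ) < (t : ℕ)} => ω.2.2 j.1)) ∧
      objFull v ch src = objWin v ch src := by
  refine ⟨fun t => key_t ch v hvu src t, ?_⟩
  unfold objFull objWin
  exact Finset.sum_congr rfl fun t _ => key_t ch v hvu src t

end FSCPaper
end
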